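/- Let F_q be a finite field with q elements and let d1, d2, k be natural numbers with k ≤ d1 and k ≤ d2. The number of pairs (u, v) of monic polynomials over F_q with deg u = d1, deg v = d2, and whose greatest common divisor has degree at least k equals q^{d1+d2−k}. -/

import Mathlib

open Polynomial

set_option linter.unusedSectionVars false
set_option maxHeartbeats 1000000

section Aux

variable {F : Type*} [Field F] [Fintype F] [DecidableEq F]

private lemma gcd_modByMonic' (u v : F[X]) (hv : v.Monic) : gcd (u %ₘ v) v = gcd u v := by
  apply dvd_antisymm_of_normalize_eq (normalize_gcd _ _) (normalize_gcd _ _)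
  · refine dvd_gcd ?_ (gcd_dvd_right _ _)
    conv_rhs => rw [← modByMonic_add_div u v]
    exact dvd_add (gcd_dvd_left _ _) ((gcd_dvd_right _ _).mul_right _)
  · refine dvd_gcd ?_ (gcd_dvd_right _ _)
    rw [modByMonic_eq_sub_mul_div u v]
    exact dvd_sub (gcd_dvd_left u v) ((gcd_dvd_right u v).mul_right _)

private lemma gcd_C_mul' {c : F} (hc : c ≠ 0) (r v : F[X]) : gcd (C c * r) v = gcd r v := by
  apply dvd_antisymm_of_normalize_eq (normalize_gcd _ _) (normalize_gcd _ _)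
  · refine dvd_gcd ?_ (gcd_dvd_right _ _)
    have h : C c⁻¹ * (C c * r) = r := by
      rw [← mul_assoc, ← C_mul, inv_mul_cancel₀ hc, C_1, one_mul]
    nth_rewrite 2 [← h]
    exact ((gcd_dvd_left _ v)).mul_left _
  · exact dvd_gcd ((gcd_dvd_left _ _).mul_left _) (gcd_dvd_right _ _)

private lemma card_monic' (n : ℕ) :
    Nat.card {p : F[X] // p.Monic ∧ p.natDegree = n} = Fintype.card F ^ n := by
  rw [Nat.card_congr ((monicEquivDegreeLT n).trans (degreeLTEquiv F n).toEquiv)]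
  simp [Nat.card_eq_fintype_card]

private lemma finite_monic' (n : ℕ) : Finite {p : F[X] // p.Monic ∧ p.natDegree = n} :=
  Finite.of_equiv _ ((monicEquivDegreeLT n).trans (degreeLTEquiv F n).toEquiv).symm

private lemma finite_natDegree_le' (n : ℕ) : {p : F[X] | p.natDegree ≤ n}.Finite := by
  haveI : Finite (degreeLT F (n + 1)) :=
    Finite.of_equiv _ (degreeLTEquiv F (n + 1)).toEquiv.symm
  refine Set.Finite.subset (Set.toFinite (degreeLT F (n + 1) : Set F[X])) ?_
  intro p hp
  have : p.degree < ((n + 1 : ℕ) : WithBot ℕ) := lt_of_le_of_lt degree_le_natDegree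
    (by exact_mod_cast Nat.lt_succ_of_le hp)
  simpa [Polynomial.mem_degreeLT] using this

private lemma finite_pairs' (a b : ℕ) :
    {p : F[X] × F[X] | p.1.natDegree ≤ a ∧ p.2.natDegree ≤ b}.Finite := by
  have h : {p : F[X] × F[X] | p.1.natDegree ≤ a ∧ p.2.natDegree ≤ b}
      = {p : F[X] | p.natDegree ≤ a} ×ˢ {p : F[X] | p.natDegree ≤ b} := rfl
  rw [h]
  exact (finite_natDegree_le' a).prod (finite_natDegree_le' b)

private lemma ncard_eq_of_bijOn {α β : Type*} {s : Set α} {t : Set β} (f : α → β)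
    (h : Set.BijOn f s t) : s.ncard = t.ncard := by
  rw [← Nat.card_coe_set_eq, ← Nat.card_coe_set_eq]
  exact Nat.card_congr (h.equiv f)

private lemma ncard_prod' {α β : Type*} (s : Set α) (t : Set β) :
    (s ×ˢ t).ncard = s.ncard * t.ncard := by
  rw [← Nat.card_coe_set_eq, ← Nat.card_coe_set_eq, ← Nat.card_coe_set_eq,
    Nat.card_congr (Equiv.Set.prod s t), Nat.card_prod]

/-- The main set of pairs. -/
private def SS (F : Type*) [Field F] [DecidableEq F] (d1 d2 k : ℕ) : Set (F[X] × F[X]) :=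
  {p : F[X] × F[X] | p.1.Monic ∧ p.2.Monic ∧ p.1.natDegree = d1 ∧
        p.2.natDegree = d2 ∧ k ≤ (gcd p.1 p.2).natDegree}

private lemma ncard_monic_set (n : ℕ) :
    ({p : F[X] | p.Monic ∧ p.natDegree = n}).ncard = Fintype.card F ^ n := by
  rw [← Nat.card_coe_set_eq]
  exact card_monic' n

private lemma SS_finite (d1 d2 k : ℕ) : (SS F d1 d2 k).Finite := by
  refine Set.Finite.subset (finite_pairs' d1 d2) ?_
  rintro ⟨u, v⟩ ⟨h1, h2, h3, h4, h5⟩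
  exact ⟨le_of_eq h3, le_of_eq h4⟩

private lemma SS_empty {e d2 k : ℕ} (he : e < k) : SS F e d2 k = ∅ := by
  ext ⟨u, v⟩
  simp only [SS, Set.mem_setOf_eq, Set.mem_empty_iff_false, iff_false, not_and]
  intro h1 h2 h3 h4
  intro h5
  have : (gcd u v).natDegree ≤ e := h3 ▸ natDegree_le_of_dvd (gcd_dvd_left u v) h1.ne_zero
  omega

private lemma SS_symm (d1 d2 k : ℕ) : (SS F d1 d2 k).ncard = (SS F d2 d1 k).ncard := by
  apply ncard_eq_of_bijOn (fun p : F[X] × F[X] => (p.2, p.1))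
  refine ⟨?_, ?_, ?_⟩
  · rintro ⟨u, v⟩ ⟨h1, h2, h3, h4, h5⟩
    exact ⟨h2, h1, h4, h3, by rwa [gcd_comm]⟩
  · rintro ⟨u, v⟩ - ⟨u', v'⟩ - h
    simp only [Prod.mk.injEq] at h
    exact Prod.ext h.2 h.1
  · rintro ⟨u, v⟩ ⟨h1, h2, h3, h4, h5⟩
    exact ⟨(v, u), ⟨h2, h1, h4, h3, by rwa [gcd_comm]⟩, rfl⟩

end Aux

section Main

variable {F : Type*} [Field F] [Fintype F] [DecidableEq F]

/-- Pairs (r, v) with `deg r < d2`, `v` monic of degree `d2`, gcd condition. -/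
private def TT (F : Type*) [Field F] [DecidableEq F] (d2 k : ℕ) : Set (F[X] × F[X]) :=
  {p : F[X] × F[X] | p.1 ∈ degreeLT F d2 ∧ p.2.Monic ∧ p.2.natDegree = d2 ∧
    k ≤ (gcd p.1 p.2).natDegree}

private lemma euclid_step (d1 d2 k : ℕ) (h21 : d2 ≤ d1) :
    (SS F d1 d2 k).ncard = Fintype.card F ^ (d1 - d2) * (TT F d2 k).ncard := by
  have hb : Set.BijOn (fun x : F[X] × (F[X] × F[X]) => (x.2.2 * x.1 + x.2.1, x.2.2))
      ({w : F[X] | w.Monic ∧ w.natDegree = d1 - d2} ×ˢ TT F d2 k) (SS F d1 d2 k) := by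
    refine ⟨?_, ?_, ?_⟩
    · rintro ⟨w, r, v⟩ ⟨⟨hwm, hwd⟩, hr, hvm, hvd, hg⟩
      have hvw : (v * w).Monic := hvm.mul hwm
      have hdvw : (v * w).natDegree = d1 := by
        rw [hvm.natDegree_mul hwm]; omega
      have hdegvw : (v * w).degree = (d1 : WithBot ℕ) := by
        rw [degree_eq_natDegree hvw.ne_zero, hdvw]
      have hrd : r.degree < (d2 : WithBot ℕ) := mem_degreeLT.mp hr
      have hrlt : r.degree < (v * w).degree := by
        rw [hdegvw]
        exact lt_of_lt_of_le hrd (by exact_mod_cast h21)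
      have hdv : v.degree = (d2 : WithBot ℕ) := by
        rw [degree_eq_natDegree hvm.ne_zero, hvd]
      have hmod : (v * w + r) %ₘ v = r :=
        (div_modByMonic_unique w r hvm ⟨add_comm r (v * w), by rw [hdv]; exact hrd⟩).2
      refine ⟨hvw.add_of_left hrlt, hvm, ?_, hvd, ?_⟩
      · rw [natDegree_add_eq_left_of_degree_lt hrlt, hdvw]
      · rw [← gcd_modByMonic' (v * w + r) v hvm, hmod]
        exact hg
    · rintro ⟨w, r, v⟩ ⟨⟨hwm, hwd⟩, hr, hvm, hvd, hg⟩
        ⟨w', r', v'⟩ ⟨⟨hwm', hwd'⟩, hr', hvm', hvd', hg'⟩ heq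
      simp only [Prod.mk.injEq] at heq
      obtain ⟨heq1, rfl⟩ := heq
      have hdv : v.degree = (d2 : WithBot ℕ) := by
        rw [degree_eq_natDegree hvm.ne_zero, hvd]
      have h1 := div_modByMonic_unique w r hvm
        ⟨add_comm r (v * w), by rw [hdv]; exact mem_degreeLT.mp hr⟩
      have h2 := div_modByMonic_unique (f := v * w + r) w' r' hvm
        ⟨(add_comm r' (v * w')).trans heq1.symm, by rw [hdv]; exact mem_degreeLT.mp hr'⟩
      refine Prod.ext ?_ (Prod.ext ?_ rfl)
      · exact h1.1.symm.trans h2.1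
      · exact h1.2.symm.trans h2.2
    · rintro ⟨u, v⟩ ⟨h1, h2, h3, h4, h5⟩
      have hdu : u.degree = (d1 : WithBot ℕ) := by
        rw [degree_eq_natDegree h1.ne_zero, h3]
      have hdv : v.degree = (d2 : WithBot ℕ) := by
        rw [degree_eq_natDegree h2.ne_zero, h4]
      have hle : v.degree ≤ u.degree := by
        rw [hdu, hdv]; exact_mod_cast h21
      refine ⟨(u /ₘ v, (u %ₘ v, v)), ⟨⟨?_, ?_⟩, ?_, h2, h4, ?_⟩, ?_⟩
      · rw [Monic, leadingCoeff_divByMonic_of_monic h2 hle]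
        exact h1
      · rw [natDegree_divByMonic u h2, h3, h4]
      · exact mem_degreeLT.mpr (by rw [← hdv]; exact degree_modByMonic_lt u h2)
      · rw [gcd_modByMonic' u v h2]
        exact h5
      · refine Prod.ext ?_ rfl
        show v * (u /ₘ v) + u %ₘ v = u
        rw [add_comm]
        exact modByMonic_add_div u v
  rw [← ncard_eq_of_bijOn _ hb, ncard_prod', ncard_monic_set]

end Main

section Count

variable {F : Type*} [Field F] [Fintype F] [DecidableEq F]

private lemma TT_ncard (d2 k : ℕ) (hk2 : k ≤ d2)
    (IH : ∀ e, k ≤ e → e < d2 → (SS F e d2 k).ncard = Fintype.card F ^ (e + d2 - k)) :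
    (TT F d2 k).ncard = Fintype.card F ^ (2 * d2 - k) := by
  classical
  set q := Fintype.card F with hq
  have hq1 : 1 ≤ q := Fintype.card_pos
  set T0 : Set (F[X] × F[X]) := {p | p.1 = 0 ∧ p.2.Monic ∧ p.2.natDegree = d2} with hT0
  set T1 : Set (F[X] × F[X]) := {p | p.1 ≠ 0 ∧ p.1 ∈ degreeLT F d2 ∧ p.2.Monic ∧
      p.2.natDegree = d2 ∧ k ≤ (gcd p.1 p.2).natDegree} with hT1
  have hsplit : TT F d2 k = T0 ∪ T1 := by
    ext ⟨r, v⟩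
    constructor
    · rintro ⟨hr, hv, hd, hg⟩
      by_cases h0 : r = 0
      · exact Or.inl ⟨h0, hv, hd⟩
      · exact Or.inr ⟨h0, hr, hv, hd, hg⟩
    · rintro (⟨h0, hv, hd⟩ | ⟨h0, hr, hv, hd, hg⟩)
      · subst h0
        refine ⟨Submodule.zero_mem _, hv, hd, ?_⟩
        show k ≤ (gcd (0 : F[X]) v).natDegree
        rw [gcd_zero_left, hv.normalize_eq_self, hd]
        exact hk2
      · exact ⟨hr, hv, hd, hg⟩
  have hbound : ∀ p : F[X] × F[X], p ∈ TT F d2 k → p.1.natDegree ≤ d2 ∧ p.2.natDegree ≤ d2 := by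
    rintro ⟨r, v⟩ ⟨hr, hv, hd, hg⟩
    exact ⟨natDegree_le_iff_degree_le.2 (le_of_lt (mem_degreeLT.mp hr)), le_of_eq hd⟩
  have hTfin : (TT F d2 k).Finite := Set.Finite.subset (finite_pairs' d2 d2) hbound
  have hT0fin : T0.Finite := Set.Finite.subset hTfin (by rw [hsplit]; exact Set.subset_union_left)
  have hT1fin : T1.Finite := Set.Finite.subset hTfin (by rw [hsplit]; exact Set.subset_union_right)
  have hdisj : Disjoint T0 T1 := by
    rw [Set.disjoint_left]
    rintro ⟨r, v⟩ ⟨h0, -⟩ ⟨h0', -⟩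
    exact h0' h0
  have hcT0 : T0.ncard = q ^ d2 := by
    have hb : Set.BijOn (fun v : F[X] => ((0 : F[X]), v))
        {v : F[X] | v.Monic ∧ v.natDegree = d2} T0 := by
      refine ⟨?_, ?_, ?_⟩
      · rintro v ⟨hv, hd⟩
        exact ⟨rfl, hv, hd⟩
      · rintro v - v' - h
        exact (Prod.mk.injEq _ _ _ _ ▸ h).2
      · rintro ⟨r, v⟩ ⟨h0, hv, hd⟩
        exact ⟨v, ⟨hv, hd⟩, by simp [h0.symm]⟩
    rw [← ncard_eq_of_bijOn _ hb, ncard_monic_set]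
  set UU : Set (F[X] × F[X]) := {p | p.1.Monic ∧ p.1.natDegree < d2 ∧ p.2.Monic ∧
      p.2.natDegree = d2 ∧ k ≤ (gcd p.1 p.2).natDegree} with hUU
  have hUfinS : UU.Finite := by
    refine Set.Finite.subset (finite_pairs' d2 d2) ?_
    rintro ⟨r, v⟩ ⟨h1, h2, h3, h4, h5⟩
    exact ⟨le_of_lt h2, le_of_eq h4⟩
  haveI hUfin : Finite ↥UU := hUfinS.to_subtype
  have hcUU : UU.ncard = ∑ e ∈ Finset.range d2, (SS F e d2 k).ncard := by
    rw [← Nat.card_coe_set_eq]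
    let G : ↥UU → Fin d2 := fun x => ⟨x.1.1.natDegree, x.2.2.1⟩
    rw [← Nat.card_congr (Equiv.sigmaFiberEquiv G)]
    haveI := Fintype.ofFinite ↥UU
    rw [Nat.card_eq_fintype_card, Fintype.card_sigma,
      ← Fin.sum_univ_eq_sum_range (fun e => (SS F e d2 k).ncard) d2]
    refine Finset.sum_congr rfl fun e _ => ?_
    rw [← Nat.card_eq_fintype_card, ← Nat.card_coe_set_eq]
    refine Nat.card_congr
      { toFun := fun x => ⟨x.1.1,
          x.1.2.1, x.1.2.2.2.1, congrArg Fin.val x.2, x.1.2.2.2.2.1, x.1.2.2.2.2.2⟩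
        invFun := fun y => ⟨⟨y.1, y.2.1,
            (by rw [y.2.2.2.1]; exact e.isLt), y.2.2.1, y.2.2.2.2.1, y.2.2.2.2.2⟩,
          Fin.ext y.2.2.2.1⟩
        left_inv := fun x => rfl
        right_inv := fun y => rfl }
  have hcT1 : T1.ncard = (q - 1) * UU.ncard := by
    have hb : Set.BijOn (fun x : F × (F[X] × F[X]) => (C x.1 * x.2.1, x.2.2))
        ({c : F | c ≠ 0} ×ˢ UU) T1 := by
      refine ⟨?_, ?_, ?_⟩
      · rintro ⟨c, r, v⟩ ⟨hc, h1, h2, h3, h4, h5⟩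
        refine ⟨mul_ne_zero (C_ne_zero.mpr hc) h1.ne_zero, ?_, h3, h4, ?_⟩
        · rw [mem_degreeLT, degree_mul, degree_C hc, zero_add,
            degree_eq_natDegree h1.ne_zero]
          exact_mod_cast h2
        · rw [gcd_C_mul' hc]
          exact h5
      · rintro ⟨c, r, v⟩ ⟨hc, h1, h2, h3, h4, h5⟩ ⟨c', r', v'⟩ ⟨hc', h1', h2', h3', h4', h5'⟩ heq
        simp only [Prod.mk.injEq] at heq
        obtain ⟨heq1, rfl⟩ := heq
        have hcc : c = c' := by
          have h := congrArg leadingCoeff heq1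
          rwa [leadingCoeff_mul, leadingCoeff_mul, leadingCoeff_C, leadingCoeff_C,
            h1.leadingCoeff, h1'.leadingCoeff, mul_one, mul_one] at h
        subst hcc
        have hrr : r = r' := mul_left_cancel₀ (C_ne_zero.mpr hc) heq1
        rw [hrr]
      · rintro ⟨r, v⟩ ⟨h0, hr, hv, hd, hg⟩
        have hc : r.leadingCoeff ≠ 0 := leadingCoeff_ne_zero.mpr h0
        have hcinv : (r.leadingCoeff⁻¹ : F) ≠ 0 := inv_ne_zero hc
        have hrne : C r.leadingCoeff⁻¹ * r ≠ 0 := mul_ne_zero (C_ne_zero.mpr hcinv) h0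
        have hmon : (C r.leadingCoeff⁻¹ * r).Monic := by
          rw [Monic, leadingCoeff_mul, leadingCoeff_C, inv_mul_cancel₀ hc]
        have hdeg : (C r.leadingCoeff⁻¹ * r).natDegree < d2 := by
          rw [natDegree_lt_iff_degree_lt hrne, degree_mul, degree_C hcinv, zero_add]
          exact mem_degreeLT.mp hr
        refine ⟨(r.leadingCoeff, (C r.leadingCoeff⁻¹ * r, v)),
          ⟨hc, hmon, hdeg, hv, hd, ?_⟩, ?_⟩
        · rw [gcd_C_mul' hcinv]
          exact hg
        · show (C r.leadingCoeff * (C r.leadingCoeff⁻¹ * r), v) = (r, v)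
          rw [← mul_assoc, ← C_mul, mul_inv_cancel₀ hc, C_1, one_mul]
    rw [← ncard_eq_of_bijOn _ hb, ncard_prod']
    congr 1
    have e1 : ↥{c : F | c ≠ 0} ≃ Fˣ := (unitsEquivNeZero (G₀ := F)).symm
    rw [← Nat.card_coe_set_eq, Nat.card_congr e1, Nat.card_eq_fintype_card,
      Fintype.card_units]
  -- assemble
  have hsum : ∑ e ∈ Finset.range d2, (SS F e d2 k).ncard
      = ∑ e ∈ Finset.Ico k d2, q ^ (e + d2 - k) := by
    rw [Finset.range_eq_Ico, ← Finset.sum_Ico_consecutive _ (Nat.zero_le k) hk2]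
    have h0 : ∑ e ∈ Finset.Ico 0 k, (SS F e d2 k).ncard = 0 :=
      Finset.sum_eq_zero fun e he => by
        rw [SS_empty (Finset.mem_Ico.mp he).2, Set.ncard_empty]
    rw [h0, zero_add]
    exact Finset.sum_congr rfl fun e he =>
      IH e (Finset.mem_Ico.mp he).1 (Finset.mem_Ico.mp he).2
  have hgeom : ∑ e ∈ Finset.Ico k d2, q ^ (e + d2 - k)
      = (∑ j ∈ Finset.range (d2 - k), q ^ j) * q ^ d2 := by
    rw [Finset.sum_Ico_eq_sum_range, Finset.sum_mul]
    exact Finset.sum_congr rfl fun j _ => by rw [← pow_add]; congr 1; omega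
  rw [hsplit, Set.ncard_union_eq hdisj hT0fin hT1fin, hcT0, hcT1, hcUU, hsum, hgeom]
  have hgs : (∑ j ∈ Finset.range (d2 - k), q ^ j) * (q - 1) = q ^ (d2 - k) - 1 :=
    geom_sum_mul_of_one_le hq1 (d2 - k)
  have h1m : 1 ≤ q ^ (d2 - k) := Nat.one_le_pow _ _ hq1
  have : (q - 1) * ((∑ j ∈ Finset.range (d2 - k), q ^ j) * q ^ d2)
      = (q ^ (d2 - k) - 1) * q ^ d2 := by
    rw [← mul_assoc, mul_comm (q - 1), hgs]
  rw [this]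
  have hpow : q ^ (2 * d2 - k) = q ^ (d2 - k) * q ^ d2 := by
    rw [← pow_add]; congr 1; omega
  rw [hpow]
  obtain ⟨a, ha⟩ : ∃ a, q ^ (d2 - k) = a + 1 := ⟨q ^ (d2 - k) - 1, by omega⟩
  rw [ha, Nat.add_sub_cancel]
  ring

end Count

section Final

variable {F : Type*} [Field F] [Fintype F] [DecidableEq F]

private lemma SS_zero (d1 d2 : ℕ) : (SS F d1 d2 0).ncard = Fintype.card F ^ (d1 + d2) := by
  have h : SS F d1 d2 0 = {p : F[X] | p.Monic ∧ p.natDegree = d1} ×ˢ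
      {p : F[X] | p.Monic ∧ p.natDegree = d2} := by
    ext ⟨u, v⟩
    simp only [SS, Set.mem_setOf_eq, Set.mem_prod, Nat.zero_le, and_true]
    tauto
  rw [h, ncard_prod', ncard_monic_set, ncard_monic_set, pow_add]

private lemma key (n d1 d2 k : ℕ) (hn : d1 + d2 ≤ n) (hk1 : k ≤ d1) (hk2 : k ≤ d2) :
    (SS F d1 d2 k).ncard = Fintype.card F ^ (d1 + d2 - k) := by
  induction n generalizing d1 d2 k with
  | zero =>
    have hk0 : k = 0 := by omega
    subst hk0
    rw [SS_zero, Nat.sub_zero]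
  | succ n ih =>
    rcases Nat.eq_zero_or_pos k with rfl | hk
    · rw [SS_zero, Nat.sub_zero]
    · by_cases h21 : d2 ≤ d1
      · rw [euclid_step d1 d2 k h21,
          TT_ncard d2 k hk2 (fun e he1 he2 => ih e d2 k (by omega) he1 hk2), ← pow_add]
        congr 1
        omega
      · push_neg at h21
        rw [SS_symm, euclid_step d2 d1 k h21.le,
          TT_ncard d1 k hk1 (fun e he1 he2 => ih e d1 k (by omega) he1 hk1), ← pow_add]
        congr 1
        omega

end Final

/-- Over a finite field with `q` elements, for `k ≤ d₁` and `k ≤ d₂`, the number of pairs of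
monic polynomials of degrees `d₁, d₂` whose gcd has degree at least `k` equals
`q^(d₁+d₂−k)`. -/
theorem count_gcd_deg_ge (F : Type*) [Field F] [Fintype F] [DecidableEq F] (q : ℕ)
    (hq : Fintype.card F = q) (d1 d2 k : ℕ) (hk1 : k ≤ d1) (hk2 : k ≤ d2) :
    Set.ncard {p : F[X] × F[X] | p.1.Monic ∧ p.2.Monic ∧ p.1.natDegree = d1 ∧
        p.2.natDegree = d2 ∧ k ≤ (gcd p.1 p.2).natDegree}
      = q ^ (d1 + d2 - k) := by
  subst hq
  have h : {p : F[X] × F[X] | p.1.Monic ∧ p.2.Monic ∧ p.1.natDegree = d1 ∧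
      p.2.natDegree = d2 ∧ k ≤ (gcd p.1 p.2).natDegree} = SS F d1 d2 k := rfl
  rw [h, key (d1 + d2) d1 d2 k le_rfl hk1 hk2]
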